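/- In the Heisenberg group, for every z ∈ ℂ and σ ∈ ℝ, the Carnot–Carathéodory distance from the identity satisfies max{|z|, √π·|σ|^{1/2}} ≤ ρ(0, zZ + z̄Z̄ + σ X∧Y) ≤ |z| + 2√π·|σ|^{1/2}. -/

import Mathlib

open MeasureTheory
open Set


lemma fubini_half (f : ℝ → ℝ) (hf : IntervalIntegrable f volume 0 1) :
    (∫ t in (0:ℝ)..1, (∫ s in (0:ℝ)..t, f s) * f t) =
      (∫ t in (0:ℝ)..1, f t) ^ 2 / 2 := by
  set μ := volume.restrict (Set.Ioc (0:ℝ) 1) with hμ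
  have hfi : Integrable f μ := by
    rw [intervalIntegrable_iff_integrableOn_Ioc_of_le (by norm_num)] at hf
    exact hf
  set I : ℝ := ∫ t in (0:ℝ)..1, f t with hI
  have hIμ : I = ∫ t, f t ∂μ := intervalIntegral.integral_of_le (by norm_num)
  set e : ℝ → ℝ → ℝ := fun s t => if s ≤ t then f s * f t else 0 with he
  have hprod : Integrable (Function.uncurry e) (μ.prod μ) := by
    have h1 : Integrable (fun p : ℝ × ℝ => f p.1 * f p.2) (μ.prod μ) :=
      hfi.mul_prod hfi
    have h2 : Function.uncurry e =
        Set.indicator {p : ℝ × ℝ | p.1 ≤ p.2} (fun p => f p.1 * f p.2) := by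
      ext p
      simp only [Function.uncurry, he, Set.indicator, Set.mem_setOf_eq]
    rw [h2]
    exact h1.indicator (measurableSet_le measurable_fst measurable_snd)
  -- primitive
  set ℓ : ℝ → ℝ := fun t => ∫ s in (0:ℝ)..t, f s with hℓ
  have hℓcont : ContinuousOn ℓ (Set.Icc 0 1) := by
    have := intervalIntegral.continuousOn_primitive_interval'
      (a := 0) (b₁ := 0) (b₂ := 1) hf (by simp)
    simpa [Set.uIcc_of_le (by norm_num : (0:ℝ) ≤ 1)] using this
  -- ℓ * f integrable
  have hℓf : Integrable (fun s => ℓ s * f s) μ := by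
    have h3 : IntervalIntegrable (fun s => ℓ s * f s) volume 0 1 := by
      apply IntervalIntegrable.continuousOn_mul _ _
      · rwa [intervalIntegrable_iff_integrableOn_Ioc_of_le (by norm_num)]
      · simpa [Set.uIcc_of_le (by norm_num : (0:ℝ) ≤ 1)] using hℓcont
    rwa [intervalIntegrable_iff_integrableOn_Ioc_of_le (by norm_num)] at h3
  -- step a : inner integral identification
  have stepa : ∀ t ∈ Set.Ioc (0:ℝ) 1, ℓ t * f t = ∫ s, e s t ∂μ := by
    intro t ht
    have h4 : (fun s => e s t) = Set.indicator (Set.Iic t) (fun s => f s * f t) := by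
      ext s
      simp only [he, Set.indicator, Set.mem_Iic]
    rw [h4, integral_indicator measurableSet_Iic, hμ,
      Measure.restrict_restrict measurableSet_Iic]
    have h5 : Set.Iic t ∩ Set.Ioc 0 1 = Set.Ioc 0 t := by
      ext x
      simp only [Set.mem_inter_iff, Set.mem_Iic, Set.mem_Ioc]
      exact ⟨fun ⟨hx, h0, _⟩ => ⟨h0, hx⟩, fun ⟨h0, hx⟩ => ⟨hx, h0, hx.trans ht.2⟩⟩
    rw [h5, integral_mul_const]
    congr 1
    exact intervalIntegral.integral_of_le ht.1.le
  -- step c : other inner integral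
  have stepc : ∀ s ∈ Set.Ioc (0:ℝ) 1, (∫ t, e s t ∂μ) = f s * I - f s * ℓ s := by
    intro s hs
    have h6 : ∀ t, e s t = f s * f t - Set.indicator (Set.Iio s) (fun t => f s * f t) t := by
      intro t
      simp only [he, Set.indicator, Set.mem_Iio]
      by_cases h : s ≤ t
      · simp [h, not_lt.mpr h]
      · simp [h, lt_of_not_ge h]
    have h7 : (∫ t, Set.indicator (Set.Iio s) (fun t => f s * f t) t ∂μ) = f s * ℓ s := by
      rw [integral_indicator measurableSet_Iio, hμ,
        Measure.restrict_restrict measurableSet_Iio]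
      have h8 : Set.Iio s ∩ Set.Ioc 0 1 = Set.Ioo 0 s := by
        ext x
        simp only [Set.mem_inter_iff, Set.mem_Iio, Set.mem_Ioc, Set.mem_Ioo]
        exact ⟨fun ⟨hx, h0, _⟩ => ⟨h0, hx⟩, fun ⟨h0, hx⟩ => ⟨hx, h0, hx.le.trans hs.2⟩⟩
      rw [h8, integral_const_mul]
      congr 1
      rw [← integral_Ioc_eq_integral_Ioo]
      exact (intervalIntegral.integral_of_le hs.1.le).symm
    simp_rw [h6]
    rw [integral_sub (hfi.const_mul _) _, h7, integral_const_mul, ← hIμ]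
    exact ((hfi.const_mul _).indicator measurableSet_Iio)
  -- now combine
  have hswap : (∫ t, ∫ s, e s t ∂μ ∂μ) = ∫ s, ∫ t, e s t ∂μ ∂μ := by
    have := integral_integral_swap (μ := μ) (ν := μ) (f := e) hprod
    exact this.symm
  have hA : (∫ t in (0:ℝ)..1, ℓ t * f t) = ∫ t, ℓ t * f t ∂μ :=
    intervalIntegral.integral_of_le (by norm_num)
  have hmain : (∫ t, ℓ t * f t ∂μ) = I * I - (∫ t, ℓ t * f t ∂μ) := by
    calc (∫ t, ℓ t * f t ∂μ) = ∫ t, ∫ s, e s t ∂μ ∂μ := by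
          rw [hμ]
          exact setIntegral_congr_fun measurableSet_Ioc stepa
      _ = ∫ s, ∫ t, e s t ∂μ ∂μ := hswap
      _ = ∫ s, (f s * I - f s * ℓ s) ∂μ := by
          rw [hμ]
          exact setIntegral_congr_fun measurableSet_Ioc stepc
      _ = I * I - (∫ t, ℓ t * f t ∂μ) := by
          rw [integral_sub (hfi.mul_const _) ?hint]
          · rw [integral_mul_const, ← hIμ]
            congr 1
            exact integral_congr_ae (Filter.Eventually.of_forall fun s => mul_comm _ _)
          · exact hℓf.congr (Filter.Eventually.of_forall fun s => (mul_comm _ _))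
  have : (∫ t, ℓ t * f t ∂μ) = I ^ 2 / 2 := by nlinarith [hmain]
  rw [hA, this]


-- norm of primitive bound
lemma prim_bound (u v : ℝ → ℝ) (hu : IntervalIntegrable u volume 0 1)
    (hv : IntervalIntegrable v volume 0 1) {t : ℝ} (ht0 : 0 ≤ t) (ht1 : t ≤ 1) :
    Real.sqrt ((∫ s in (0:ℝ)..t, u s) ^ 2 + (∫ s in (0:ℝ)..t, v s) ^ 2) ≤
      ∫ s in (0:ℝ)..t, Real.sqrt (u s ^ 2 + v s ^ 2) := by
  have hsub : Set.uIoc (0:ℝ) t ⊆ Set.uIoc (0:ℝ) 1 := by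
    rw [Set.uIoc_of_le ht0, Set.uIoc_of_le (by norm_num : (0:ℝ) ≤ 1)]
    exact Set.Ioc_subset_Ioc le_rfl ht1
  have hu' : IntervalIntegrable u volume 0 t := hu.mono_set' hsub
  have hv' : IntervalIntegrable v volume 0 t := hv.mono_set' hsub
  have huC : IntervalIntegrable (fun s => (u s : ℂ)) volume 0 t := by
    refine hu'.mono_fun ?_ ?_
    · exact Complex.continuous_ofReal.comp_aestronglyMeasurable
        (hu'.aestronglyMeasurable.mono_set (by rw [Set.uIoc_of_le ht0]))
    · filter_upwards with x
      simp
  have hvC : IntervalIntegrable (fun s => (v s : ℂ) * Complex.I) volume 0 t := by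
    refine hv'.mono_fun ?_ ?_
    · exact (Complex.continuous_ofReal.comp_aestronglyMeasurable
        (hv'.aestronglyMeasurable.mono_set (by rw [Set.uIoc_of_le ht0]))).mul_const _
    · filter_upwards with x
      simp
  have key : (∫ s in (0:ℝ)..t, ((u s : ℂ) + (v s : ℂ) * Complex.I)) =
      ((∫ s in (0:ℝ)..t, u s : ℝ) : ℂ) + ((∫ s in (0:ℝ)..t, v s : ℝ) : ℂ) * Complex.I := by
    rw [intervalIntegral.integral_add huC hvC, intervalIntegral.integral_mul_const]
    norm_cast
    rw [intervalIntegral.integral_ofReal, intervalIntegral.integral_ofReal]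
  have habs : ∀ x y : ℝ, ‖((x:ℂ) + (y:ℂ) * Complex.I)‖ = Real.sqrt (x^2 + y^2) := by
    intro x y
    rw [Complex.norm_def, Complex.normSq_add_mul_I]
  calc Real.sqrt ((∫ s in (0:ℝ)..t, u s) ^ 2 + (∫ s in (0:ℝ)..t, v s) ^ 2)
      = ‖∫ s in (0:ℝ)..t, ((u s : ℂ) + (v s : ℂ) * Complex.I)‖ := by
        rw [key, habs]
    _ ≤ ∫ s in (0:ℝ)..t, ‖(u s : ℂ) + (v s : ℂ) * Complex.I‖ :=
        intervalIntegral.norm_integral_le_integral_norm ht0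
    _ = ∫ s in (0:ℝ)..t, Real.sqrt (u s ^ 2 + v s ^ 2) := by
        congr 1
        funext s
        rw [habs]

lemma speed_integrable (u v : ℝ → ℝ) (hu : IntervalIntegrable u volume 0 1)
    (hv : IntervalIntegrable v volume 0 1) :
    IntervalIntegrable (fun t => Real.sqrt (u t ^ 2 + v t ^ 2)) volume 0 1 := by
  refine (hu.abs.add hv.abs).mono_fun ?_ ?_
  · refine Real.continuous_sqrt.comp_aestronglyMeasurable ?_
    have h1 := hu.aestronglyMeasurable.mono_set
      (by rw [Set.uIoc_of_le (by norm_num : (0:ℝ) ≤ 1)] : Set.uIoc (0:ℝ) 1 ⊆ Set.Ioc 0 1)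
    have h2 := hv.aestronglyMeasurable.mono_set
      (by rw [Set.uIoc_of_le (by norm_num : (0:ℝ) ≤ 1)] : Set.uIoc (0:ℝ) 1 ⊆ Set.Ioc 0 1)
    exact ((h1.aemeasurable.pow_const 2).add (h2.aemeasurable.pow_const 2)).aestronglyMeasurable
  · filter_upwards with x
    simp only [Real.norm_eq_abs]
    rw [abs_of_nonneg (Real.sqrt_nonneg _)]
    have : u x ^ 2 + v x ^ 2 ≤ (|u x| + |v x|) ^ 2 := by
      have := abs_nonneg (u x); have := abs_nonneg (v x)
      nlinarith [sq_abs (u x), sq_abs (v x), mul_nonneg (abs_nonneg (u x)) (abs_nonneg (v x))]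
    calc Real.sqrt (u x ^ 2 + v x ^ 2) ≤ Real.sqrt ((|u x| + |v x|) ^ 2) :=
          Real.sqrt_le_sqrt this
      _ = |u x| + |v x| := Real.sqrt_sq (by positivity)
      _ ≤ |(|u x| + |v x|)| := le_abs_self _

lemma lower_bound (a b σ L : ℝ) (u v : ℝ → ℝ)
    (hu : IntervalIntegrable u volume 0 1) (hv : IntervalIntegrable v volume 0 1)
    (ha : (∫ t in (0:ℝ)..1, u t) = a) (hb : (∫ t in (0:ℝ)..1, v t) = b)
    (hσ : (∫ t in (0:ℝ)..1,
        (1 / 2) * ((∫ s in (0:ℝ)..t, u s) * v t - (∫ s in (0:ℝ)..t, v s) * u t)) = σ)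
    (hL : L = ∫ t in (0:ℝ)..1, Real.sqrt (u t ^ 2 + v t ^ 2)) :
    Real.sqrt (a ^ 2 + b ^ 2) ≤ L ∧ Real.sqrt Real.pi * Real.sqrt |σ| ≤ L := by
  have h01 : (0:ℝ) ≤ 1 := by norm_num
  set f : ℝ → ℝ := fun t => Real.sqrt (u t ^ 2 + v t ^ 2) with hf
  have hfint : IntervalIntegrable f volume 0 1 := speed_integrable u v hu hv
  have hLnn : 0 ≤ L := by
    rw [hL]
    exact intervalIntegral.integral_nonneg h01 (fun t _ => Real.sqrt_nonneg _)
  -- first part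
  have part1 : Real.sqrt (a ^ 2 + b ^ 2) ≤ L := by
    rw [← ha, ← hb, hL]
    exact prim_bound u v hu hv h01 le_rfl
  refine ⟨part1, ?_⟩
  -- second part
  set X : ℝ → ℝ := fun t => ∫ s in (0:ℝ)..t, u s with hX
  set Y : ℝ → ℝ := fun t => ∫ s in (0:ℝ)..t, v s with hY
  set ℓ : ℝ → ℝ := fun t => ∫ s in (0:ℝ)..t, f s with hℓ
  have hXc : ContinuousOn X (Set.uIcc (0:ℝ) 1) :=
    intervalIntegral.continuousOn_primitive_interval' hu (by simp)
  have hYc : ContinuousOn Y (Set.uIcc (0:ℝ) 1) :=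
    intervalIntegral.continuousOn_primitive_interval' hv (by simp)
  have hℓc : ContinuousOn ℓ (Set.uIcc (0:ℝ) 1) :=
    intervalIntegral.continuousOn_primitive_interval' hfint (by simp)
  have hgint : IntervalIntegrable
      (fun t => (1/2) * (X t * v t - Y t * u t)) volume 0 1 := by
    exact (((hv.continuousOn_mul hXc).sub (hu.continuousOn_mul hYc)).const_mul _)
  have hℓfint : IntervalIntegrable (fun t => (1/2) * (ℓ t * f t)) volume 0 1 :=
    (hfint.continuousOn_mul hℓc).const_mul _
  -- pointwise bound on Icc
  have hpt : ∀ t ∈ Set.Icc (0:ℝ) 1,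
      |(1/2) * (X t * v t - Y t * u t)| ≤ (1/2) * (ℓ t * f t) := by
    intro t ht
    have hXY : Real.sqrt (X t ^ 2 + Y t ^ 2) ≤ ℓ t := prim_bound u v hu hv ht.1 ht.2
    have hcs : |X t * v t - Y t * u t| ≤ Real.sqrt (X t ^ 2 + Y t ^ 2) * f t := by
      have h1 : (X t * v t - Y t * u t) ^ 2 ≤ (X t ^ 2 + Y t ^ 2) * (u t ^ 2 + v t ^ 2) := by
        nlinarith [sq_nonneg (X t * u t + Y t * v t)]
      calc |X t * v t - Y t * u t| = Real.sqrt ((X t * v t - Y t * u t) ^ 2) :=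
            (Real.sqrt_sq_eq_abs _).symm
        _ ≤ Real.sqrt ((X t ^ 2 + Y t ^ 2) * (u t ^ 2 + v t ^ 2)) := Real.sqrt_le_sqrt h1
        _ = Real.sqrt (X t ^ 2 + Y t ^ 2) * f t := Real.sqrt_mul (by positivity) _
    rw [abs_mul, abs_of_nonneg (by norm_num : (0:ℝ) ≤ 1/2)]
    have hfnn : 0 ≤ f t := Real.sqrt_nonneg _
    have : |X t * v t - Y t * u t| ≤ ℓ t * f t :=
      hcs.trans (mul_le_mul_of_nonneg_right hXY hfnn)
    linarith
  have hσle : |σ| ≤ L ^ 2 / 4 := by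
    calc |σ| = |∫ t in (0:ℝ)..1, (1/2) * (X t * v t - Y t * u t)| := by rw [hσ]
      _ ≤ ∫ t in (0:ℝ)..1, |(1/2) * (X t * v t - Y t * u t)| :=
          intervalIntegral.abs_integral_le_integral_abs h01
      _ ≤ ∫ t in (0:ℝ)..1, (1/2) * (ℓ t * f t) :=
          intervalIntegral.integral_mono_on h01 hgint.abs hℓfint hpt
      _ = (1/2) * ∫ t in (0:ℝ)..1, ℓ t * f t := intervalIntegral.integral_const_mul _ _
      _ = (1/2) * ((∫ t in (0:ℝ)..1, f t) ^ 2 / 2) := by rw [fubini_half f hfint]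
      _ = L ^ 2 / 4 := by rw [hL]; ring
  have hsπ : Real.sqrt Real.pi ≤ 2 := by
    rw [show (2:ℝ) = Real.sqrt 4 by
      rw [show (4:ℝ) = 2 ^ 2 by norm_num, Real.sqrt_sq (by norm_num)]]
    exact Real.sqrt_le_sqrt Real.pi_le_four
  calc Real.sqrt Real.pi * Real.sqrt |σ| ≤ 2 * Real.sqrt ((L/2)^2) := by
        apply mul_le_mul hsπ (Real.sqrt_le_sqrt (by nlinarith)) (Real.sqrt_nonneg _) (by norm_num)
    _ = 2 * (L/2) := by rw [Real.sqrt_sq (by linarith)]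
    _ = L := by ring


noncomputable section Helpers

lemma sin4pi : Real.sin (4 * Real.pi) = 0 := by
  rw [show (4:ℝ) * Real.pi = 2 * Real.pi + 2 * Real.pi by ring, Real.sin_add,
    Real.sin_two_pi, Real.cos_two_pi]; ring

lemma cos4pi : Real.cos (4 * Real.pi) = 1 := by
  rw [show (4:ℝ) * Real.pi = 2 * Real.pi + 2 * Real.pi by ring, Real.cos_add,
    Real.sin_two_pi, Real.cos_two_pi]; ring

lemma int_cos4 (p q : ℝ) : (∫ t in p..q, Real.cos (4 * Real.pi * t)) =
    (Real.sin (4 * Real.pi * q) - Real.sin (4 * Real.pi * p)) / (4 * Real.pi) := by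
  have h : (4:ℝ) * Real.pi ≠ 0 := by positivity
  rw [intervalIntegral.integral_comp_mul_left Real.cos h, integral_cos, smul_eq_mul]
  field_simp

lemma int_sin4 (p q : ℝ) : (∫ t in p..q, Real.sin (4 * Real.pi * t)) =
    (Real.cos (4 * Real.pi * p) - Real.cos (4 * Real.pi * q)) / (4 * Real.pi) := by
  have h : (4:ℝ) * Real.pi ≠ 0 := by positivity
  rw [intervalIntegral.integral_comp_mul_left Real.sin h, integral_sin, smul_eq_mul]
  field_simp

lemma piecewise_ii (c : ℝ) (g : ℝ → ℝ) (hg : Continuous g) :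
    IntervalIntegrable (fun t => if t ≤ 1/2 then c else g t) volume 0 1 := by
  have h1 : IntervalIntegrable (fun t => if t ≤ 1/2 then c else g t) volume 0 (1/2) := by
    rw [intervalIntegrable_iff]
    refine ((integrableOn_const_iff (C := c)).mpr (Or.inr ?_)).congr_fun ?_ measurableSet_uIoc
    · rw [Set.uIoc_of_le (by norm_num : (0:ℝ) ≤ 1/2)]
      exact measure_Ioc_lt_top
    · intro x hx
      rw [Set.uIoc_of_le (by norm_num : (0:ℝ) ≤ 1/2)] at hx
      simp only [if_pos hx.2]
  have h2 : IntervalIntegrable (fun t => if t ≤ 1/2 then c else g t) volume (1/2) 1 := by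
    rw [intervalIntegrable_iff]
    refine ((hg.intervalIntegrable (1/2) 1).def').congr_fun ?_ measurableSet_uIoc
    intro x hx
    rw [Set.uIoc_of_le (by norm_num : (1/2:ℝ) ≤ 1)] at hx
    simp only []
    rw [if_neg (not_le.mpr (by linarith [hx.1] : (1:ℝ)/2 < x))]
  exact h1.trans h2

end Helpers

open MeasureTheory Set

lemma upper_mem (a b σ : ℝ) (ε R : ℝ) (hε2 : ε ^ 2 = 1) (hεσ : ε * |σ| = σ)
    (hR : 0 ≤ R) (hπR2 : Real.pi * R ^ 2 = |σ|) :
    ∃ u v : ℝ → ℝ, IntervalIntegrable u volume 0 1 ∧ IntervalIntegrable v volume 0 1 ∧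
      (∫ t in (0:ℝ)..1, u t) = a ∧ (∫ t in (0:ℝ)..1, v t) = b ∧
      (∫ t in (0:ℝ)..1,
        (1 / 2) * ((∫ s in (0:ℝ)..t, u s) * v t - (∫ s in (0:ℝ)..t, v s) * u t)) = σ ∧
      (∫ t in (0:ℝ)..1, Real.sqrt (u t ^ 2 + v t ^ 2))
        = Real.sqrt (a ^ 2 + b ^ 2) + 2 * Real.pi * R := by
  have hπ : (0:ℝ) < Real.pi := Real.pi_pos
  set u : ℝ → ℝ := fun t => if t ≤ 1/2 then 2*a else 4*Real.pi*R*Real.cos (4*Real.pi*t)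
    with hu_def
  set v : ℝ → ℝ := fun t => if t ≤ 1/2 then 2*b else ε*(4*Real.pi*R)*Real.sin (4*Real.pi*t)
    with hv_def
  have hu : IntervalIntegrable u volume 0 1 :=
    piecewise_ii _ _ (by continuity)
  have hv : IntervalIntegrable v volume 0 1 :=
    piecewise_ii _ _ (by continuity)
  have h012 : ((0:ℝ)) ≤ 1/2 := by norm_num
  have h121 : ((1:ℝ)/2) ≤ 1 := by norm_num
  have hu1 : IntervalIntegrable u volume 0 (1/2) :=
    hu.mono_set' (by
      rw [Set.uIoc_of_le h012, Set.uIoc_of_le (by norm_num : (0:ℝ) ≤ 1)]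
      exact Set.Ioc_subset_Ioc le_rfl h121)
  have hu2 : ∀ t : ℝ, 1/2 ≤ t → t ≤ 1 → IntervalIntegrable u volume (1/2) t := fun t ht' ht =>
    hu.mono_set' (by
      rw [Set.uIoc_of_le (by norm_num : (0:ℝ) ≤ 1), Set.uIoc_of_le ht']
      exact Set.Ioc_subset_Ioc (by norm_num) ht)
  have hv1 : IntervalIntegrable v volume 0 (1/2) :=
    hv.mono_set' (by
      rw [Set.uIoc_of_le h012, Set.uIoc_of_le (by norm_num : (0:ℝ) ≤ 1)]
      exact Set.Ioc_subset_Ioc le_rfl h121)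
  have hv2 : ∀ t : ℝ, 1/2 ≤ t → t ≤ 1 → IntervalIntegrable v volume (1/2) t := fun t ht' ht =>
    hv.mono_set' (by
      rw [Set.uIoc_of_le (by norm_num : (0:ℝ) ≤ 1), Set.uIoc_of_le ht']
      exact Set.Ioc_subset_Ioc (by norm_num) ht)
  -- first-half primitives
  have hXhalf : (∫ s in (0:ℝ)..(1/2), u s) = a := by
    rw [intervalIntegral.integral_congr (g := fun _ => 2*a)
      (fun x hx => by
        rw [Set.uIcc_of_le h012] at hx
        simp only [hu_def, if_pos hx.2])]
    simp
  have hYhalf : (∫ s in (0:ℝ)..(1/2), v s) = b := by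
    rw [intervalIntegral.integral_congr (g := fun _ => 2*b)
      (fun x hx => by
        rw [Set.uIcc_of_le h012] at hx
        simp only [hv_def, if_pos hx.2])]
    simp
  have hXarc : ∀ t : ℝ, 1/2 ≤ t → (∫ s in (1/2:ℝ)..t, u s) = R * Real.sin (4*Real.pi*t) := by
    intro t ht
    have : (∫ s in (1/2:ℝ)..t, u s) = ∫ s in (1/2:ℝ)..t, 4*Real.pi*R*Real.cos (4*Real.pi*s) := by
      apply intervalIntegral.integral_congr_ae
      filter_upwards with x hx
      rw [Set.uIoc_of_le ht] at hx
      simp only [hu_def]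
      rw [if_neg (not_le.mpr (by linarith [hx.1] : (1:ℝ)/2 < x))]
    rw [this, intervalIntegral.integral_const_mul, int_cos4]
    rw [show 4*Real.pi*(1/2 : ℝ) = 2*Real.pi by ring, Real.sin_two_pi]
    field_simp
    ring
  have hYarc : ∀ t : ℝ, 1/2 ≤ t →
      (∫ s in (1/2:ℝ)..t, v s) = ε*R*(1 - Real.cos (4*Real.pi*t)) := by
    intro t ht
    have : (∫ s in (1/2:ℝ)..t, v s) =
        ∫ s in (1/2:ℝ)..t, ε*(4*Real.pi*R)*Real.sin (4*Real.pi*s) := by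
      apply intervalIntegral.integral_congr_ae
      filter_upwards with x hx
      rw [Set.uIoc_of_le ht] at hx
      simp only [hv_def]
      rw [if_neg (not_le.mpr (by linarith [hx.1] : (1:ℝ)/2 < x))]
    rw [this, intervalIntegral.integral_const_mul, int_sin4]
    rw [show 4*Real.pi*(1/2 : ℝ) = 2*Real.pi by ring, Real.cos_two_pi]
    field_simp
  -- full primitives on the arc
  have hX : ∀ t : ℝ, 1/2 ≤ t → t ≤ 1 →
      (∫ s in (0:ℝ)..t, u s) = a + R * Real.sin (4*Real.pi*t) := by
    intro t ht ht1
    rw [← intervalIntegral.integral_add_adjacent_intervals hu1 (hu2 t ht ht1), hXhalf, hXarc t ht]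
  have hY : ∀ t : ℝ, 1/2 ≤ t → t ≤ 1 →
      (∫ s in (0:ℝ)..t, v s) = b + ε*R*(1 - Real.cos (4*Real.pi*t)) := by
    intro t ht ht1
    rw [← intervalIntegral.integral_add_adjacent_intervals hv1 (hv2 t ht ht1), hYhalf, hYarc t ht]
  refine ⟨u, v, hu, hv, ?_, ?_, ?_, ?_⟩
  · rw [hX 1 h121 le_rfl, show 4*Real.pi*(1:ℝ) = 4*Real.pi by ring, sin4pi]; ring
  · rw [hY 1 h121 le_rfl, show 4*Real.pi*(1:ℝ) = 4*Real.pi by ring, cos4pi]; ring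
  · -- the σ integral
    have hXc : ContinuousOn (fun t => ∫ s in (0:ℝ)..t, u s) (Set.uIcc (0:ℝ) 1) :=
      intervalIntegral.continuousOn_primitive_interval' hu (by simp)
    have hYc : ContinuousOn (fun t => ∫ s in (0:ℝ)..t, v s) (Set.uIcc (0:ℝ) 1) :=
      intervalIntegral.continuousOn_primitive_interval' hv (by simp)
    have hgint : IntervalIntegrable (fun t =>
        (1/2) * ((∫ s in (0:ℝ)..t, u s) * v t - (∫ s in (0:ℝ)..t, v s) * u t)) volume 0 1 :=
      ((hv.continuousOn_mul hXc).sub (hu.continuousOn_mul hYc)).const_mul _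
    have hg1 := hgint.mono_set' (by
      rw [Set.uIoc_of_le h012, Set.uIoc_of_le (by norm_num : (0:ℝ) ≤ 1)]
      exact Set.Ioc_subset_Ioc le_rfl h121)
    have hg2 := hgint.mono_set' (by
      rw [Set.uIoc_of_le h121, Set.uIoc_of_le (by norm_num : (0:ℝ) ≤ 1)]
      exact Set.Ioc_subset_Ioc (by norm_num) le_rfl)
    rw [← intervalIntegral.integral_add_adjacent_intervals hg1 hg2]
    have hXfirst : ∀ t ∈ Set.Icc (0:ℝ) (1/2), (∫ s in (0:ℝ)..t, u s) = 2*a*t := by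
      intro t ht
      rw [intervalIntegral.integral_congr (g := fun _ => 2*a) (fun x hx => by
        rw [Set.uIcc_of_le ht.1] at hx
        simp only [hu_def, if_pos (hx.2.trans ht.2)])]
      rw [intervalIntegral.integral_const, smul_eq_mul]; ring
    have hYfirst : ∀ t ∈ Set.Icc (0:ℝ) (1/2), (∫ s in (0:ℝ)..t, v s) = 2*b*t := by
      intro t ht
      rw [intervalIntegral.integral_congr (g := fun _ => 2*b) (fun x hx => by
        rw [Set.uIcc_of_le ht.1] at hx
        simp only [hv_def, if_pos (hx.2.trans ht.2)])]
      rw [intervalIntegral.integral_const, smul_eq_mul]; ring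
    have first : (∫ t in (0:ℝ)..(1/2),
        (1/2) * ((∫ s in (0:ℝ)..t, u s) * v t - (∫ s in (0:ℝ)..t, v s) * u t)) = 0 := by
      rw [intervalIntegral.integral_congr (g := fun _ => (0:ℝ)) (fun x hx => by
        rw [Set.uIcc_of_le h012] at hx
        rw [hXfirst x hx, hYfirst x hx]
        simp only [hu_def, hv_def, if_pos hx.2]
        ring)]
      simp
    have second : (∫ t in (1/2:ℝ)..1,
        (1/2) * ((∫ s in (0:ℝ)..t, u s) * v t - (∫ s in (0:ℝ)..t, v s) * u t)) = σ := by
      have hcongr : ∀ᵐ x ∂(volume : Measure ℝ), x ∈ Set.uIoc (1/2:ℝ) 1 →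
          (1/2) * ((∫ s in (0:ℝ)..x, u s) * v x - (∫ s in (0:ℝ)..x, v s) * u x) =
          (2*Real.pi*R*ε*a) * Real.sin (4*Real.pi*x) +
            ((-(2*Real.pi*R*b) - 2*Real.pi*R*R*ε) * Real.cos (4*Real.pi*x) +
              2*Real.pi*ε*R^2) := by
        filter_upwards with x hx
        rw [Set.uIoc_of_le h121] at hx
        rw [hX x hx.1.le hx.2, hY x hx.1.le hx.2]
        simp only [hu_def, hv_def, if_neg (not_le.mpr hx.1)]
        linear_combination (2*Real.pi*ε*R^2) * (Real.sin_sq_add_cos_sq (4*Real.pi*x))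
      rw [intervalIntegral.integral_congr_ae hcongr]
      have i1 : IntervalIntegrable (fun t => (2*Real.pi*R*ε*a) * Real.sin (4*Real.pi*t))
          volume (1/2) 1 := (continuous_const.mul
            (Real.continuous_sin.comp (continuous_const.mul continuous_id))).intervalIntegrable _ _
      have i2 : IntervalIntegrable
          (fun t => (-(2*Real.pi*R*b) - 2*Real.pi*R*R*ε) * Real.cos (4*Real.pi*t))
          volume (1/2) 1 := (continuous_const.mul
            (Real.continuous_cos.comp (continuous_const.mul continuous_id))).intervalIntegrable _ _
      have i3 : IntervalIntegrable (fun _ => 2*Real.pi*ε*R^2)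
          volume (1/2) 1 := intervalIntegrable_const
      rw [intervalIntegral.integral_add i1 (i2.add i3), intervalIntegral.integral_add i2 i3,
        intervalIntegral.integral_const_mul, intervalIntegral.integral_const_mul,
        int_sin4, int_cos4, intervalIntegral.integral_const,
        show 4*Real.pi*(1:ℝ) = 4*Real.pi by ring,
        show 4*Real.pi*(1/2:ℝ) = 2*Real.pi by ring,
        Real.sin_two_pi, Real.cos_two_pi, sin4pi, cos4pi, smul_eq_mul]
      linear_combination ε * hπR2 + hεσ
    rw [first, second]; ring
  · -- the length integral
    have hf : IntervalIntegrable (fun t => Real.sqrt (u t ^ 2 + v t ^ 2)) volume 0 1 :=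
      speed_integrable u v hu hv
    have hf1 := hf.mono_set' (by
      rw [Set.uIoc_of_le h012, Set.uIoc_of_le (by norm_num : (0:ℝ) ≤ 1)]
      exact Set.Ioc_subset_Ioc le_rfl h121)
    have hf2 := hf.mono_set' (by
      rw [Set.uIoc_of_le h121, Set.uIoc_of_le (by norm_num : (0:ℝ) ≤ 1)]
      exact Set.Ioc_subset_Ioc (by norm_num) le_rfl)
    rw [← intervalIntegral.integral_add_adjacent_intervals hf1 hf2]
    have first : (∫ t in (0:ℝ)..(1/2), Real.sqrt (u t ^ 2 + v t ^ 2)) =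
        Real.sqrt (a ^ 2 + b ^ 2) := by
      rw [intervalIntegral.integral_congr (g := fun _ => 2 * Real.sqrt (a^2+b^2))
        (fun x hx => by
          rw [Set.uIcc_of_le h012] at hx
          simp only [hu_def, hv_def, if_pos hx.2]
          rw [show (2*a)^2+(2*b)^2 = 2^2*(a^2+b^2) by ring,
            Real.sqrt_mul (by positivity) _, Real.sqrt_sq (by norm_num : (0:ℝ) ≤ 2)])]
      rw [intervalIntegral.integral_const, smul_eq_mul]; ring
    have second : (∫ t in (1/2:ℝ)..1, Real.sqrt (u t ^ 2 + v t ^ 2)) = 2*Real.pi*R := by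
      have hcongr : ∀ᵐ x ∂(volume : Measure ℝ), x ∈ Set.uIoc (1/2:ℝ) 1 →
          Real.sqrt (u x ^ 2 + v x ^ 2) = 4*Real.pi*R := by
        filter_upwards with x hx
        rw [Set.uIoc_of_le h121] at hx
        simp only [hu_def, hv_def, if_neg (not_le.mpr hx.1)]
        rw [show (4*Real.pi*R*Real.cos (4*Real.pi*x))^2 +
            (ε*(4*Real.pi*R)*Real.sin (4*Real.pi*x))^2 = (4*Real.pi*R)^2 by
          linear_combination ((4*Real.pi*R)^2) * (Real.sin_sq_add_cos_sq (4*Real.pi*x)) +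
            ((4*Real.pi*R)^2 * (Real.sin (4*Real.pi*x))^2) * hε2]
        exact Real.sqrt_sq (by positivity)
      rw [intervalIntegral.integral_congr_ae hcongr, intervalIntegral.integral_const,
        smul_eq_mul]
      ring
    rw [first, second]


/-- The Carnot–Carathéodory distance from the identity in the Heisenberg group
`G²(ℝ²)`, in exponential coordinates: the point is `a·X + b·Y + σ·X∧Y`.  Horizontal
curves are absolutely continuous curves `Γ = γ + γ⁽²⁾` with `γ' = u` and
`(γ⁽²⁾)' = ½ (x u₂ - y u₁)`, encoded via their `L¹` control `u = (u₁, u₂)`. -/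
noncomputable def heisCC (a b σ : ℝ) : ℝ :=
  sInf {L : ℝ | ∃ u v : ℝ → ℝ,
    IntervalIntegrable u volume 0 1 ∧ IntervalIntegrable v volume 0 1 ∧
    (∫ t in (0:ℝ)..1, u t) = a ∧ (∫ t in (0:ℝ)..1, v t) = b ∧
    (∫ t in (0:ℝ)..1,
        (1 / 2) * ((∫ s in (0:ℝ)..t, u s) * v t - (∫ s in (0:ℝ)..t, v s) * u t)) = σ ∧
    L = ∫ t in (0:ℝ)..1, Real.sqrt (u t ^ 2 + v t ^ 2)}


/-- For `z ∈ ℂ` and `σ ∈ ℝ`,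
`max{|z|, √π |σ|^{1/2}} ≤ ρ(0, zZ + z̄Z̄ + σX∧Y) ≤ |z| + 2√π |σ|^{1/2}`. -/
theorem stmt_7 (z : ℂ) (σ : ℝ) :
    max (‖z‖) (Real.sqrt Real.pi * |σ| ^ ((1:ℝ)/2)) ≤ heisCC z.re z.im σ ∧
    heisCC z.re z.im σ ≤ ‖z‖ + 2 * Real.sqrt Real.pi * |σ| ^ ((1:ℝ)/2) := by
  set a := z.re
  set b := z.im
  have hπ : (0:ℝ) < Real.pi := Real.pi_pos
  have hsπ : (0:ℝ) < Real.sqrt Real.pi := Real.sqrt_pos.mpr hπ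
  set ε : ℝ := if 0 ≤ σ then 1 else -1 with hεdef
  set R : ℝ := Real.sqrt |σ| / Real.sqrt Real.pi with hRdef
  have hε2 : ε ^ 2 = 1 := by
    rw [hεdef]; split_ifs <;> norm_num
  have hεσ : ε * |σ| = σ := by
    rw [hεdef]; split_ifs with h
    · rw [abs_of_nonneg h]; ring
    · rw [abs_of_neg (not_le.mp h)]; ring
  have hR : 0 ≤ R := by positivity
  have hπR2 : Real.pi * R ^ 2 = |σ| := by
    rw [hRdef, div_pow, Real.sq_sqrt (abs_nonneg σ), Real.sq_sqrt hπ.le]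
    field_simp
  obtain ⟨u, v, hu, hv, ha, hb, hσi, hlen⟩ := upper_mem a b σ ε R hε2 hεσ hR hπR2
  have hmem : (Real.sqrt (a ^ 2 + b ^ 2) + 2 * Real.pi * R) ∈
      {L : ℝ | ∃ u v : ℝ → ℝ,
        IntervalIntegrable u volume 0 1 ∧ IntervalIntegrable v volume 0 1 ∧
        (∫ t in (0:ℝ)..1, u t) = a ∧ (∫ t in (0:ℝ)..1, v t) = b ∧
        (∫ t in (0:ℝ)..1,
            (1 / 2) * ((∫ s in (0:ℝ)..t, u s) * v t - (∫ s in (0:ℝ)..t, v s) * u t)) = σ ∧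
        L = ∫ t in (0:ℝ)..1, Real.sqrt (u t ^ 2 + v t ^ 2)} :=
    ⟨u, v, hu, hv, ha, hb, hσi, hlen.symm⟩
  have hne : Set.Nonempty {L : ℝ | ∃ u v : ℝ → ℝ,
        IntervalIntegrable u volume 0 1 ∧ IntervalIntegrable v volume 0 1 ∧
        (∫ t in (0:ℝ)..1, u t) = a ∧ (∫ t in (0:ℝ)..1, v t) = b ∧
        (∫ t in (0:ℝ)..1,
            (1 / 2) * ((∫ s in (0:ℝ)..t, u s) * v t - (∫ s in (0:ℝ)..t, v s) * u t)) = σ ∧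
        L = ∫ t in (0:ℝ)..1, Real.sqrt (u t ^ 2 + v t ^ 2)} := ⟨_, hmem⟩
  have hbdd : BddBelow {L : ℝ | ∃ u v : ℝ → ℝ,
        IntervalIntegrable u volume 0 1 ∧ IntervalIntegrable v volume 0 1 ∧
        (∫ t in (0:ℝ)..1, u t) = a ∧ (∫ t in (0:ℝ)..1, v t) = b ∧
        (∫ t in (0:ℝ)..1,
            (1 / 2) * ((∫ s in (0:ℝ)..t, u s) * v t - (∫ s in (0:ℝ)..t, v s) * u t)) = σ ∧
        L = ∫ t in (0:ℝ)..1, Real.sqrt (u t ^ 2 + v t ^ 2)} := by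
    refine ⟨0, ?_⟩
    rintro L ⟨u', v', hu', hv', _, _, _, rfl⟩
    exact intervalIntegral.integral_nonneg (by norm_num) (fun t _ => Real.sqrt_nonneg _)
  have habs : ‖z‖ = Real.sqrt (a ^ 2 + b ^ 2) := by
    rw [Complex.norm_def, Complex.normSq_apply]
    congr 1
    ring
  have hrpow : |σ| ^ ((1:ℝ)/2) = Real.sqrt |σ| := (Real.sqrt_eq_rpow _).symm
  have h2πR : 2 * Real.pi * R = 2 * Real.sqrt Real.pi * Real.sqrt |σ| := by
    have hsq : Real.sqrt Real.pi * Real.sqrt Real.pi = Real.pi :=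
      Real.mul_self_sqrt hπ.le
    rw [hRdef]
    field_simp
    linear_combination (-Real.sqrt |σ|) * (Real.sq_sqrt hπ.le)
  constructor
  · apply le_csInf hne
    rintro L ⟨u', v', hu', hv', ha', hb', hσ', hL'⟩
    obtain ⟨h1, h2⟩ := lower_bound a b σ L u' v' hu' hv' ha' hb' hσ' hL'
    exact max_le (habs ▸ h1) (by rw [hrpow]; exact h2)
  · refine (csInf_le hbdd hmem).trans (le_of_eq ?_)
    rw [habs, hrpow, h2πR]
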